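/- Let M1, M2, M3 in SL(2,C). Define p_i = tr(M_i), p_{ij} = tr(M_i M_j) for i > j, and p_{321} = tr(M3 M2 M1). Then p_{32}p_{31}p_{21} + p_{32}^2 + p_{31}^2 + p_{21}^2 − (p_1 p_{321} + p_2 p_3)p_{32} − (p_2 p_{321} + p_1 p_3)p_{31} − (p_3 p_{321} + p_1 p_2)p_{21} + p_1^2 + p_2^2 + p_3^2 + p_{321}^2 + p_1 p_2 p_3 p_{321} − 4 = 0. -/

import Mathlib

abbrev SL2 := Matrix.SpecialLinearGroup (Fin 2) ℂ

noncomputable def tr (A : SL2) : ℂ := (A : Matrix (Fin 2) (Fin 2) ℂ).trace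

theorem fricke_relation (M1 M2 M3 : SL2) :
    tr (M3 * M2) * tr (M3 * M1) * tr (M2 * M1)
      + tr (M3 * M2) ^ 2 + tr (M3 * M1) ^ 2 + tr (M2 * M1) ^ 2
      - (tr M1 * tr (M3 * M2 * M1) + tr M2 * tr M3) * tr (M3 * M2)
      - (tr M2 * tr (M3 * M2 * M1) + tr M1 * tr M3) * tr (M3 * M1)
      - (tr M3 * tr (M3 * M2 * M1) + tr M1 * tr M2) * tr (M2 * M1)
      + tr M1 ^ 2 + tr M2 ^ 2 + tr M3 ^ 2 + tr (M3 * M2 * M1) ^ 2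
      + tr M1 * tr M2 * tr M3 * tr (M3 * M2 * M1) - 4 = 0 := by
  simp only [tr, Matrix.SpecialLinearGroup.coe_mul, Matrix.trace_fin_two,
    Matrix.mul_apply, Fin.sum_univ_two, Fin.isValue]
  obtain ⟨A1, hA1⟩ := M1
  obtain ⟨A2, hA2⟩ := M2
  obtain ⟨A3, hA3⟩ := M3
  rw [Matrix.det_fin_two] at hA1 hA2 hA3
  set a1 := A1 0 0; set b1 := A1 0 1; set c1 := A1 1 0; set d1 := A1 1 1
  set a2 := A2 0 0; set b2 := A2 0 1; set c2 := A2 1 0; set d2 := A2 1 1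
  set a3 := A3 0 0; set b3 := A3 0 1; set c3 := A3 1 0; set d3 := A3 1 1
  simp only [tr, Matrix.SpecialLinearGroup.coe_mul, Matrix.trace_fin_two,
    Matrix.mul_apply, Fin.sum_univ_two]
  linear_combination (((-2:ℂ))*b3*c3 + d2^2*b3*c3 + ((-1:ℂ))*c2*d2*b3*d3 + c2*d2*a3*b3 + ((-1:ℂ))*c2^2*b3^2 + ((-1:ℂ))*b2*d2*c3*d3 + b2*d2*a3*c3 + ((-2:ℂ))*b2*c2 + b2*c2*d3^2 + ((-2:ℂ))*b2*c2*b3*c3 + b2*c2*a3^2 + ((-1:ℂ))*b2^2*c3^2 + a2*c2*b3*d3 + ((-1:ℂ))*a2*c2*a3*b3 + a2*b2*c3*d3 + ((-1:ℂ))*a2*b2*a3*c3 + a2^2*b3*c3) * hA1 + ((2:ℂ) + ((-1:ℂ))*d3^2 + ((-1:ℂ))*a3^2 + d1^2*b3*c3 + ((-1:ℂ))*c1*d1*b3*d3 + c1*d1*a3*b3 + ((-1:ℂ))*c1^2*b3^2 + ((-1:ℂ))*b1*d1*c3*d3 + b1*d1*a3*c3 + ((-1:ℂ))*b1^2*c3^2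 + ((-2:ℂ))*a1*d1 + a1*d1*d3^2 + ((-2:ℂ))*a1*d1*b3*c3 + a1*d1*a3^2 + a1*c1*b3*d3 + ((-1:ℂ))*a1*c1*a3*b3 + a1*b1*c3*d3 + ((-1:ℂ))*a1*b1*a3*c3 + a1^2*b3*c3) * hA2 + ((2:ℂ) + ((-1:ℂ))*d2^2 + ((-1:ℂ))*a2^2 + ((-1:ℂ))*d1^2 + d1^2*a2*d2 + ((-1:ℂ))*c1*d1*b2*d2 + c1*d1*a2*b2 + ((-1:ℂ))*c1^2*b2^2 + ((-1:ℂ))*b1*d1*c2*d2 + b1*d1*a2*c2 + ((-1:ℂ))*b1^2*c2^2 + a1*d1*d2^2 + ((-2:ℂ))*a1*d1*a2*d2 + a1*d1*a2^2 + a1*c1*b2*d2 + ((-1:ℂ))*a1*c1*a2*b2 + a1*b1*c2*d2 + ((-1:ℂ))*a1*b1*a2*c2 + ((-1:ℂ))*a1^2 + a1^2*a2*d2) * hA3
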